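/- For every n ≥ 4, the wheel graph on n vertices (a cycle on n-1 vertices plus a hub vertex joined to all cycle vertices) has exactly 2n-2 edges and contains no proper subgraph of minimum degree at least 3. -/

import Mathlib

/-- The wheel graph on `m + 1` vertices: a hub (`none`) joined to all vertices of a
cycle on `m` vertices (`some i`, with `some i` adjacent to `some (i+1)`). -/
def wheelGraph (m : ℕ) : SimpleGraph (Option (Fin m)) :=
  SimpleGraph.fromRel (fun a b =>
    match a, b with
    | none, some _ => True
    | some i, some j => (j : ℕ) = ((i : ℕ) + 1) % m
    | _, _ => False)

section Aux
open Fin.NatCast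
variable {m : ℕ} [NeZero m] (hm : 3 ≤ m)

noncomputable instance (m : ℕ) : DecidableRel (wheelGraph m).Adj := Classical.decRel _

lemma wheel_adj (a b : Option (Fin m)) :
    (wheelGraph m).Adj a b ↔ a ≠ b ∧
      ((match a, b with
        | none, some _ => True
        | some i, some j => (j : ℕ) = ((i : ℕ) + 1) % m
        | _, _ => False) ∨
       (match b, a with
        | none, some _ => True
        | some i, some j => (j : ℕ) = ((i : ℕ) + 1) % m
        | _, _ => False)) := SimpleGraph.fromRel_adj _ a b

include hm

lemma val_one' : (1 : Fin m).val = 1 := by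
  rw [Fin.val_one', Nat.mod_eq_of_lt (by omega)]

lemma succ_iff (i j : Fin m) : (j : ℕ) = ((i : ℕ) + 1) % m ↔ j = i + 1 := by
  rw [Fin.ext_iff, Fin.add_def, val_one' hm]

lemma pred_iff (i j : Fin m) : (i : ℕ) = ((j : ℕ) + 1) % m ↔ j = i - 1 := by
  rw [succ_iff hm, eq_comm, eq_sub_iff_add_eq, eq_comm]

lemma succ_ne (i : Fin m) : i + 1 ≠ i := by
  intro h
  rw [Fin.ext_iff, Fin.add_def, val_one' hm] at h
  have := i.isLt
  simp only [Fin.val_mk] at h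
  rcases Nat.lt_or_ge (i.val + 1) m with h' | h'
  · rw [Nat.mod_eq_of_lt h'] at h; omega
  · have : i.val + 1 = m := by omega
    rw [this, Nat.mod_self] at h; omega

lemma pred_ne (i : Fin m) : i - 1 ≠ i := by
  intro h
  rw [Fin.ext_iff, Fin.sub_def, val_one' hm] at h
  have := i.isLt
  simp only [Fin.val_mk] at h
  rcases Nat.lt_or_ge (m - 1 + i.val) m with h' | h'
  · rw [Nat.mod_eq_of_lt h'] at h; omega
  · have h2 : m - 1 + i.val - m < m := by omega
    rw [Nat.mod_eq_sub_mod h', Nat.mod_eq_of_lt h2] at h; omega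

lemma succ_ne_pred (i : Fin m) : i + 1 ≠ i - 1 := by
  intro h
  rw [Fin.ext_iff, Fin.add_def, Fin.sub_def, val_one' hm] at h
  have := i.isLt
  simp only [Fin.val_mk] at h
  rcases Nat.lt_or_ge (i.val + 1) m with h' | h'
  · rw [Nat.mod_eq_of_lt h'] at h
    rcases Nat.lt_or_ge (m - 1 + i.val) m with h2 | h2
    · rw [Nat.mod_eq_of_lt h2] at h; omega
    · have h3 : m - 1 + i.val - m < m := by omega
      rw [Nat.mod_eq_sub_mod h2, Nat.mod_eq_of_lt h3] at h; omega
  · have h1 : i.val + 1 = m := by omega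
    have h2 : m - 1 + i.val < 2 * m := by omega
    have h4 : m ≤ m - 1 + i.val := by omega
    have h3 : m - 1 + i.val - m < m := by omega
    rw [h1, Nat.mod_self, Nat.mod_eq_sub_mod h4, Nat.mod_eq_of_lt h3] at h
    omega

lemma nbr_some (i : Fin m) :
    (wheelGraph m).neighborSet (some i) = {none, some (i + 1), some (i - 1)} := by
  ext b
  cases b with
  | none =>
    simp [SimpleGraph.mem_neighborSet, wheel_adj]
  | some j =>
    simp only [SimpleGraph.mem_neighborSet, wheel_adj, Set.mem_insert_iff,
      Set.mem_singleton_iff, Option.some.injEq, reduceCtorEq, false_or]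
    rw [succ_iff hm, pred_iff hm]
    constructor
    · rintro ⟨-, h⟩; exact h
    · rintro (rfl | rfl)
      · exact ⟨by simpa using (succ_ne hm i).symm, Or.inl rfl⟩
      · exact ⟨by simpa using (pred_ne hm i).symm, Or.inr rfl⟩

omit hm in
lemma nbr_none : (wheelGraph m).neighborSet none = Set.range some := by
  ext b
  cases b with
  | none => simp [SimpleGraph.mem_neighborSet, wheel_adj]
  | some j => simp [SimpleGraph.mem_neighborSet, wheel_adj]

lemma ncard_nbr_some (i : Fin m) :
    ((wheelGraph m).neighborSet (some i)).ncard = 3 := by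
  rw [nbr_some hm]
  rw [Set.ncard_insert_of_notMem (by simp) (Set.toFinite _),
    Set.ncard_pair (by simpa using succ_ne_pred hm i)]

omit hm in
lemma ncard_nbr_none : ((wheelGraph m).neighborSet none).ncard = m := by
  rw [nbr_none, ← Nat.card_coe_set_eq,
    Nat.card_range_of_injective (Option.some_injective _), Nat.card_eq_fintype_card,
    Fintype.card_fin]

lemma edge_count : (wheelGraph m).edgeSet.ncard = 2 * m := by
  classical
  have h := SimpleGraph.sum_degrees_eq_twice_card_edges (wheelGraph m)
  have hd : ∀ v, (wheelGraph m).degree v = ((wheelGraph m).neighborSet v).ncard := by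
    intro v
    rw [Set.ncard_eq_toFinset_card']
    simp [SimpleGraph.degree, SimpleGraph.neighborFinset]
  rw [Fintype.sum_option] at h
  simp only [hd, ncard_nbr_none, ncard_nbr_some hm] at h
  simp only [Finset.sum_const, Finset.card_univ, Fintype.card_fin, smul_eq_mul] at h
  have h2 : (wheelGraph m).edgeSet.ncard = (wheelGraph m).edgeFinset.card := by
    rw [Set.ncard_eq_toFinset_card']
    rfl
  omega

variable {H : (wheelGraph m).Subgraph}
  (hdeg : ∀ v ∈ H.verts, 3 ≤ (H.neighborSet v).ncard)

include hdeg

lemma adj_all (i : Fin m) (hi : some i ∈ H.verts) (b : Option (Fin m))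
    (hb : (wheelGraph m).Adj (some i) b) : H.Adj (some i) b := by
  have heq : H.neighborSet (some i) = (wheelGraph m).neighborSet (some i) := by
    apply Set.eq_of_subset_of_ncard_le (H.neighborSet_subset _)
    rw [ncard_nbr_some hm]; exact hdeg _ hi
  have : b ∈ H.neighborSet (some i) := heq ▸ hb
  exact this

lemma propagate (i : Fin m) (hi : some i ∈ H.verts) :
    ∀ k : ℕ, some (i + (k : Fin m)) ∈ H.verts := by
  intro k
  induction k with
  | zero => simpa using hi
  | succ k ih =>
    have hadj : H.Adj (some (i + (k : Fin m))) (some (i + (k : Fin m) + 1)) := by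
      apply adj_all hm hdeg _ ih
      have : some (i + (k : Fin m) + 1) ∈ (wheelGraph m).neighborSet (some (i + (k : Fin m))) := by
        rw [nbr_some hm]; simp
      exact this
    have hmem := hadj.snd_mem
    have hc : ((k + 1 : ℕ) : Fin m) = (k : Fin m) + 1 := by push_cast; ring
    rw [hc, ← add_assoc]
    exact hmem

lemma all_some (i : Fin m) (hi : some i ∈ H.verts) (j : Fin m) : some j ∈ H.verts := by
  have h := propagate hm hdeg i hi (((j - i : Fin m) : ℕ))
  rw [Fin.cast_val_eq_self] at h
  have he : i + (j - i) = j := by abel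
  rwa [he] at h

end Aux

/-- For `n ≥ 4`, the wheel graph on `n` vertices has exactly `2n - 2` edges and
contains no proper subgraph of minimum degree at least `3`. -/
theorem wheel_edges_and_no_proper_min_degree_three (n : ℕ) (hn : 4 ≤ n) :
    (wheelGraph (n - 1)).edgeSet.ncard = 2 * n - 2 ∧
    ∀ H : (wheelGraph (n - 1)).Subgraph, H.verts.Nonempty →
      (∀ v ∈ H.verts, 3 ≤ (H.neighborSet v).ncard) → H = ⊤ := by
  set m := n - 1 with hm'
  have hm : 3 ≤ m := by omega
  haveI : NeZero m := ⟨by omega⟩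
  constructor
  · rw [edge_count hm]; omega
  · rintro H ⟨v, hv⟩ hdeg
    obtain ⟨i0, hi0⟩ : ∃ i : Fin m, some i ∈ H.verts := by
      cases v with
      | some i => exact ⟨i, hv⟩
      | none =>
        have h3 := hdeg none hv
        have hne : (H.neighborSet none).Nonempty := by
          apply Set.nonempty_of_ncard_ne_zero; omega
        obtain ⟨w, hw⟩ := hne
        have hGw : (wheelGraph m).Adj none w := H.adj_sub hw
        cases w with
        | none => exact absurd hGw (wheelGraph m).irrefl
        | some j => exact ⟨j, (hw : H.Adj none (some j)).snd_mem⟩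
    have hall : ∀ j : Fin m, some j ∈ H.verts := all_some hm hdeg i0 hi0
    have hnone : none ∈ H.verts := by
      have hadj : H.Adj (some i0) none := by
        apply adj_all hm hdeg _ hi0
        have : (none : Option (Fin m)) ∈ (wheelGraph m).neighborSet (some i0) := by
          rw [nbr_some hm]; simp
        exact this
      exact hadj.snd_mem
    apply SimpleGraph.Subgraph.ext
    · ext w
      simp only [SimpleGraph.Subgraph.verts_top, Set.mem_univ, iff_true]
      cases w with
      | none => exact hnone
      | some j => exact hall j
    · ext a b
      simp only [SimpleGraph.Subgraph.top_adj]
      constructor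
      · exact fun h => H.adj_sub h
      · intro hab
        cases a with
        | some i => exact adj_all hm hdeg i (hall i) b hab
        | none =>
          cases b with
          | none => exact absurd hab (wheelGraph m).irrefl
          | some j => exact (adj_all hm hdeg j (hall j) none hab.symm).symm
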